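/- arXiv:2201.01338 — 2 statements merged into one kernel-verified Lean document; each statement's English description precedes it below -/
import Mathlib

section
/- If the function f_1(u,·) is concave for every u ∈ U, then E[ϑ_E^{(N)}] ≤ ϑ; that is, the empirical optimal value of the two-level composite problem has a downward (non-positive) bias. -/
open MeasureTheory Filter Set

noncomputable section

abbrev Vec (d : ℕ) : Type := EuclideanSpace ℝ (Fin d)

/-- Nested composite value: level `0` is the innermost function (the paper's `f_{k+1}`),
level `k` is the outermost one (the paper's `f_1`). -/
def nest {α : Type} [MeasurableSpace α] (n : ℕ) (d : ℕ → ℕ)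
    (f : (t : ℕ) → Vec n → Vec (d t) → α → Vec (d (t + 1)))
    (Q : ℕ → Measure α) (u : Vec n) : (t : ℕ) → Vec (d t)
  | 0 => 0
  | t + 1 => ∫ x, f t u (nest n d f Q u t) x ∂(Q t)

/-- Composite functional value (a scalar, since `d (k+1) = 1`). -/
def rhoC {α : Type} [MeasurableSpace α] (n k : ℕ) (d : ℕ → ℕ)
    (f : (t : ℕ) → Vec n → Vec (d t) → α → Vec (d (t + 1)))
    (Q : ℕ → Measure α) (u : Vec n) : ℝ :=
  ∑ i, nest n d f Q u (k + 1) i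

def optVal {n : ℕ} (U : Set (Vec n)) (g : Vec n → ℝ) : ℝ := sInf (g '' U)

def argminSet {n : ℕ} (U : Set (Vec n)) (g : Vec n → ℝ) : Set (Vec n) :=
  {u ∈ U | g u = optVal U g}

/-- one-sided deviation 𝔡(A,B) -/
def dev {E : Type} [PseudoMetricSpace E] (A B : Set E) : ℝ :=
  sSup ((fun x => Metric.infDist x B) '' A)

/-- Pompeiu–Hausdorff distance 𝔇(A,B) -/
def hdist {E : Type} [PseudoMetricSpace E] (A B : Set E) : ℝ :=
  max (dev A B) (dev B A)

/-- empirical measure of the first `N` observations -/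
def empMeas {α : Type} [MeasurableSpace α] {Ω : Type} [MeasurableSpace Ω]
    (X : ℕ → Ω → α) (N : ℕ) (ω : Ω) : Measure α :=
  (N : ENNReal)⁻¹ • ∑ i ∈ Finset.range N, Measure.dirac (X i ω)

/-- convolution of measures on an additive group -/
def convMeas {α : Type} [MeasurableSpace α] [Add α] (μ ν : Measure α) : Measure α :=
  Measure.map (fun p : α × α => p.1 + p.2) (μ.prod ν)

/-- closed convex hull -/
def cco {E : Type} [AddCommGroup E] [Module ℝ E] [TopologicalSpace E] (s : Set E) : Set E :=
  closure (convexHull ℝ s)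

/-- kernel smoothing measure with bandwidth `h`:  dμ(x) = h^{-m} K(x/h) dx -/
def kerMeas (m : ℕ) (K : Vec m → ℝ) (h : ℝ) : Measure (Vec m) :=
  volume.withDensity fun x => ENNReal.ofReal (K (h⁻¹ • x) / h ^ m)

/-- A continuous concave function on a normed space has an affine majorant. -/
lemma concave_exists_affine_ge {E : Type*} [NormedAddCommGroup E] [NormedSpace ℝ E]
    {f : E → ℝ} (hf : ConcaveOn ℝ univ f) (hc : Continuous f) :
    ∃ (L : E →L[ℝ] ℝ) (a : ℝ), ∀ y, f y ≤ a + L y := by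
  set s : Set (E × ℝ) := {p : E × ℝ | p.2 < f p.1} with hs
  have hconv : Convex ℝ s := by
    have := hf.convex_strict_hypograph
    simpa [s, Set.sep_univ] using this
  have hopen : IsOpen s := by
    have : s = {p : E × ℝ | p.2 - f p.1 < 0} := by
      ext p; simp [s, sub_neg]
    rw [this]
    exact isOpen_lt (continuous_snd.sub (hc.comp continuous_fst)) continuous_const
  have hx0 : ((0 : E), f 0) ∉ s := by simp [s]
  obtain ⟨ℓ, hℓ⟩ := geometric_hahn_banach_open_point hconv hopen hx0
  set c : ℝ := ℓ (0, 1) with hcdef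
  have hsplit : ∀ (y : E) (t : ℝ), ℓ (y, t) = ℓ (y, 0) + t * c := by
    intro y t
    have : (y, t) = (y, (0 : ℝ)) + t • ((0 : E), (1 : ℝ)) := by
      simp [Prod.ext_iff]
    rw [this, map_add, ℓ.map_smul, smul_eq_mul, hcdef]
  have hc0 : (0 : ℝ) < c := by
    have h1 : ℓ (0, f 0 - 1) < ℓ (0, f 0) := hℓ _ (by simp [s])
    have e1 : ℓ (0, f 0 - 1) = ℓ (0, 0) + (f 0 - 1) * c := hsplit _ _
    have e2 : ℓ (0, f 0) = ℓ (0, 0) + f 0 * c := hsplit _ _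
    nlinarith [h1, e1, e2]
  refine ⟨(-c⁻¹) • (ℓ.comp (ContinuousLinearMap.inl ℝ E ℝ)), f 0 + ℓ (0, 0) / c, fun y => ?_⟩
  have key : ℓ (y, 0) + f y * c ≤ ℓ (0, 0) + f 0 * c := by
    refine le_of_forall_pos_lt_add fun ε hε => ?_
    have hδ : 0 < ε / c := div_pos hε hc0
    have h1 := hℓ (y, f y - ε / c) (by simp [s, hδ])
    have e1 : ℓ (y, f y - ε / c) = ℓ (y, 0) + (f y - ε / c) * c := hsplit _ _
    have e2 : ℓ (0, f 0) = ℓ (0, 0) + f 0 * c := hsplit _ _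
    have e3 : ε / c * c = ε := div_mul_cancel₀ _ (ne_of_gt hc0)
    nlinarith [h1, e1, e2, e3]
  have hLy : ((-c⁻¹) • (ℓ.comp (ContinuousLinearMap.inl ℝ E ℝ))) y = -c⁻¹ * ℓ (y, 0) := by
    simp [ContinuousLinearMap.smul_apply]
  rw [hLy, div_eq_mul_inv]
  have hcc : c * c⁻¹ = 1 := mul_inv_cancel₀ (ne_of_gt hc0)
  have h4 : ℓ (y, 0) * c⁻¹ + f y ≤ ℓ (0, 0) * c⁻¹ + f 0 := by
    have h := mul_le_mul_of_nonneg_right key (le_of_lt (inv_pos.mpr hc0))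
    rw [add_mul, add_mul, mul_assoc, mul_assoc, hcc, mul_one, mul_one] at h
    exact h
  linarith

/-- **Lemma 4.1 (downward bias of the empirical optimal value of a two-level
composite problem).** -/
theorem empirical_downward_bias
    (n m m1 : ℕ)
    (U : Set (Vec n)) (hUne : U.Nonempty) (hUc : IsCompact U)
    (f1 : Vec n → Vec m1 → ℝ)
    (hf1cont : Continuous fun p : Vec n × Vec m1 => f1 p.1 p.2)
    (f2 : Vec n → Vec m → Vec m1)
    (hf2cont : ∀ x, Continuous fun u => f2 u x)
    (P : Measure (Vec m)) [IsProbabilityMeasure P]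
    (hf2int : ∀ u, Integrable (fun x => f2 u x) P)
    -- f1(u,·) is concave for every u ∈ U
    (hconc : ∀ u ∈ U, ConcaveOn ℝ univ (f1 u))
    -- the i.i.d. sample X_1, …, X_N with distribution P
    (Ω : Type) [MeasurableSpace Ω] (μ : Measure Ω) [IsProbabilityMeasure μ]
    (X : ℕ → Ω → Vec m) (hXmeas : ∀ i, Measurable (X i))
    (hiid : ProbabilityTheory.iIndepFun X μ)
    (hXdist : ∀ i, Measure.map (X i) μ = P)
    (N : ℕ) (hN : 0 < N)
    -- the empirical optimal value is integrable
    (hintE : Integrable (fun ω => sInf ((fun u =>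
      f1 u ((N : ℝ)⁻¹ • ∑ i ∈ Finset.range N, f2 u (X i ω))) '' U)) μ) :
    ∫ ω, sInf ((fun u =>
        f1 u ((N : ℝ)⁻¹ • ∑ i ∈ Finset.range N, f2 u (X i ω))) '' U) ∂μ
      ≤ sInf ((fun u => f1 u (∫ x, f2 u x ∂P)) '' U) := by
  refine le_csInf (hUne.image _) ?_
  rintro b ⟨u, hu, rfl⟩
  -- notation
  set g : Ω → Vec m1 := fun ω => (N : ℝ)⁻¹ • ∑ i ∈ Finset.range N, f2 u (X i ω) with hgdef
  have hf1u : Continuous (f1 u) := hf1cont.comp (Continuous.prodMk_right u)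
  -- integrability of each sample term
  have hint_i : ∀ i, Integrable (fun ω => f2 u (X i ω)) μ := by
    intro i
    have h := hf2int u
    rw [← hXdist i] at h
    exact (integrable_map_measure h.aestronglyMeasurable (hXmeas i).aemeasurable).mp h
  have hsum : Integrable (fun ω => ∑ i ∈ Finset.range N, f2 u (X i ω)) μ :=
    integrable_finset_sum _ fun i _ => hint_i i
  have hg : Integrable g μ := hsum.smul ((N : ℝ)⁻¹)
  -- mean of g equals the true mean
  have hEg : ∫ ω, g ω ∂μ = ∫ x, f2 u x ∂P := by
    rw [hgdef]
    rw [integral_smul, integral_finset_sum _ fun i _ => hint_i i]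
    have hterm : ∀ i ∈ Finset.range N, ∫ ω, f2 u (X i ω) ∂μ = ∫ x, f2 u x ∂P := by
      intro i _
      rw [← hXdist i, integral_map (hXmeas i).aemeasurable]
      rw [hXdist i]
      exact (hf2int u).aestronglyMeasurable
    rw [Finset.sum_congr rfl hterm, Finset.sum_const, Finset.card_range,
      ← Nat.cast_smul_eq_nsmul ℝ, smul_smul,
      inv_mul_cancel₀ (by exact_mod_cast hN.ne' : (N : ℝ) ≠ 0), one_smul]
  -- pointwise lower bound: the inf is below the value at u
  have hlow : ∀ ω, sInf ((fun v =>
      f1 v ((N : ℝ)⁻¹ • ∑ i ∈ Finset.range N, f2 v (X i ω))) '' U)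
        ≤ f1 u (g ω) := by
    intro ω
    have hcontU : Continuous fun v : Vec n =>
        f1 v ((N : ℝ)⁻¹ • ∑ i ∈ Finset.range N, f2 v (X i ω)) := by
      have h2 : Continuous fun v : Vec n =>
          (N : ℝ)⁻¹ • ∑ i ∈ Finset.range N, f2 v (X i ω) :=
        (continuous_finset_sum (Finset.range N) fun i _ => hf2cont (X i ω)).const_smul ((N : ℝ)⁻¹)
      exact hf1cont.comp (continuous_id.prodMk h2)
    exact csInf_le ((hUc.image hcontU).bddBelow) (mem_image_of_mem _ hu)
  -- integrability of f1 u ∘ g by squeezing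
  obtain ⟨L, a, hLa⟩ := concave_exists_affine_ge (hconc u hu) hf1u
  have hupint : Integrable (fun ω => a + L (g ω)) μ :=
    (integrable_const a).add (L.integrable_comp hg)
  have hgi : Integrable (fun ω => f1 u (g ω)) μ := by
    refine integrable_of_le_of_le
      (hf1u.comp_aestronglyMeasurable hg.aestronglyMeasurable)
      (Filter.Eventually.of_forall hlow)
      (Filter.Eventually.of_forall fun ω => hLa (g ω)) hintE hupint
  -- Jensen's inequality
  have hjensen : (∫ ω, f1 u (g ω) ∂μ) ≤ f1 u (∫ ω, g ω ∂μ) := by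
    refine ConcaveOn.le_map_integral (hconc u hu) hf1u.continuousOn isClosed_univ
      (Filter.Eventually.of_forall fun ω => mem_univ _) hg hgi
  calc ∫ ω, sInf ((fun v =>
        f1 v ((N : ℝ)⁻¹ • ∑ i ∈ Finset.range N, f2 v (X i ω))) '' U) ∂μ
      ≤ ∫ ω, f1 u (g ω) ∂μ :=
        integral_mono hintE hgi hlow
    _ ≤ f1 u (∫ ω, g ω ∂μ) := hjensen
    _ = f1 u (∫ x, f2 u x ∂P) := by rw [hEg]
end
end

section
/- Let φ : ℝ → [0,∞) be right-continuous, of finite variation, with compact support in [−a,a] (1/2 ≤ a < ∞), satisfying ∑_{ℓ∈ℤ} φ(x−ℓ) = 1 for all x ∈ ℝ (condition (w1)) and ∑_{ℓ∈ℤ} ℓ φ(x−ℓ) = x for all x ∈ ℝ (condition (w2)). Let g : ℝ → ℝ be convex and integrable against the measure with density x ↦ 2^j ∑_{ℓ∈ℤ} φ(2^j y − ℓ) φ(2^j x − ℓ). Then for every y ∈ ℝ and every integer j, 2^j ∫_ℝ g(x) ∑_{ℓ∈ℤ} φ(2^j y − ℓ) φ(2^j x − ℓ) dx ≥ g(y).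 In particular, for a sample X_1,…,X_N, the wavelet density estimator d̃_{N,j}(x) = ∑_{ℓ∈ℤ} 2^{−j/2} (1/N) ∑_{i=1}^N φ(2^j X_i − ℓ) φ_{jℓ}(x) satisfies ∫ g(x) d̃_{N,j}(x) dx ≥ (1/N) ∑_{i=1}^N g(X_i) for every convex integrable g. -/
open MeasureTheory Filter Set


private lemma wj_measurable (φ : ℝ → ℝ) (hφbv : BoundedVariationOn φ univ) :
    Measurable φ := by
  obtain ⟨p, q, hp, hq, hfpq⟩ :=
    hφbv.locallyBoundedVariationOn.exists_monotoneOn_sub_monotoneOn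
  rw [hfpq]
  exact ((monotoneOn_univ.mp hp).measurable).sub ((monotoneOn_univ.mp hq).measurable)

private lemma wj_bound (φ : ℝ → ℝ) (hφbv : BoundedVariationOn φ univ) :
    ∃ M : ℝ, 0 ≤ M ∧ ∀ x, |φ x| ≤ M := by
  refine ⟨(eVariationOn φ univ).toReal + |φ 0|, by positivity, fun x => ?_⟩
  have := hφbv.dist_le (mem_univ x) (mem_univ 0)
  rw [Real.dist_eq] at this
  calc |φ x| ≤ |φ x - φ 0| + |φ 0| := by
        simpa using abs_add_le (φ x - φ 0) (φ 0)
    _ ≤ (eVariationOn φ univ).toReal + |φ 0| := by linarith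

private lemma wj_support_line {g : ℝ → ℝ} (hg : ConvexOn ℝ univ g) (y : ℝ) :
    ∃ s : ℝ, ∀ x, g y + s * (x - y) ≤ g x := by
  set T : Set ℝ := (fun z => (g z - g y) / (z - y)) '' Ioi y with hT
  have hne : T.Nonempty := ⟨_, ⟨y + 1, by simp, rfl⟩⟩
  have hbdd : BddBelow T := by
    refine ⟨(g y - g (y - 1)) / (y - (y - 1)), ?_⟩
    rintro z ⟨w, hw, rfl⟩
    exact hg.slope_mono_adjacent (mem_univ _) (mem_univ _) (by linarith) hw
  refine ⟨sInf T, fun x => ?_⟩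
  rcases lt_trichotomy x y with hxy | rfl | hxy
  · have h1 : (g y - g x) / (y - x) ≤ sInf T := by
      apply le_csInf hne
      rintro z ⟨w, hw, rfl⟩
      exact hg.slope_mono_adjacent (mem_univ _) (mem_univ _) hxy hw
    rw [div_le_iff₀ (by linarith)] at h1
    nlinarith [h1]
  · simp
  · have h1 : sInf T ≤ (g x - g y) / (x - y) := csInf_le hbdd ⟨x, hxy, rfl⟩
    rw [le_div_iff₀ (by linarith)] at h1
    linarith


private lemma wj_integrable (φ : ℝ → ℝ) (hm : Measurable φ) {M : ℝ}
    (hb : ∀ x, |φ x| ≤ M) {a : ℝ} (hφsupp : Function.support φ ⊆ Icc (-a) a) :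
    Integrable φ := by
  rw [← integrableOn_iff_integrable_of_support_subset hφsupp]
  exact Measure.integrableOn_of_bounded (by simp) hm.aestronglyMeasurable
    (ae_of_all _ fun x => by simpa [Real.norm_eq_abs] using hb x)

private lemma wj_integrable_id (φ : ℝ → ℝ) (hm : Measurable φ) {M : ℝ}
    (hb : ∀ x, |φ x| ≤ M) {a : ℝ} (ha : 0 ≤ a)
    (hφsupp : Function.support φ ⊆ Icc (-a) a) :
    Integrable (fun x => x * φ x) := by
  have hsupp : Function.support (fun x => x * φ x) ⊆ Icc (-a) a := by
    intro x hx
    apply hφsupp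
    intro h0
    exact hx (by simp [Function.mem_support, h0])
  rw [← integrableOn_iff_integrable_of_support_subset hsupp]
  refine Measure.integrableOn_of_bounded (M := a * M) (by simp)
    ((measurable_id.mul hm).aestronglyMeasurable) ?_
  rw [ae_restrict_iff' measurableSet_Icc]
  refine ae_of_all _ fun x hx => ?_
  rw [Real.norm_eq_abs, abs_mul]
  have h1 : |x| ≤ a := abs_le.2 ⟨hx.1, hx.2⟩
  have h2 := hb x
  have h3 : (0:ℝ) ≤ |x| := abs_nonneg x
  nlinarith [abs_nonneg (φ x)]


private lemma wj_tele (f : ℝ → ℝ) (hf : Integrable f) (m M : ℤ) (h : m ≤ M) :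
    ∑ ℓ ∈ Finset.Icc m M, ∫ x in (0:ℝ)..1, f (x - (ℓ:ℝ)) =
      ∫ x in (-(M:ℝ))..(1 - (m:ℝ)), f x := by
  have hint : ∀ a b : ℝ, IntervalIntegrable f volume a b := fun a b => hf.intervalIntegrable
  set n : ℕ := (M - m).toNat + 1 with hn
  set ψ : ℕ → ℝ := fun k => -(M:ℝ) + k with hψ
  have hcast : ((M - m).toNat : ℝ) = (M : ℝ) - m := by
    have := Int.toNat_of_nonneg (sub_nonneg.2 h)
    exact_mod_cast congrArg (fun z : ℤ => (z : ℝ)) this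
  have htele : ∑ k ∈ Finset.range n, ∫ x in (ψ k)..(ψ (k+1)), f x = ∫ x in (ψ 0)..(ψ n), f x :=
    intervalIntegral.sum_integral_adjacent_intervals fun k _ => hint _ _
  have h0 : ψ 0 = -(M:ℝ) := by simp [hψ]
  have h1 : ψ n = 1 - (m:ℝ) := by rw [hψ, hn]; push_cast [hcast]; ring
  rw [← h0, ← h1, ← htele]
  refine Finset.sum_nbij' (i := fun ℓ : ℤ => (M - ℓ).toNat) (j := fun k : ℕ => M - (k:ℤ))
    ?_ ?_ ?_ ?_ ?_
  · intro ℓ hℓ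
    rw [Finset.mem_Icc] at hℓ
    rw [Finset.mem_range, hn]
    omega
  · intro k hk
    rw [Finset.mem_range, hn] at hk
    rw [Finset.mem_Icc]
    omega
  · intro ℓ hℓ
    rw [Finset.mem_Icc] at hℓ
    omega
  · intro k hk
    rw [Finset.mem_range, hn] at hk
    omega
  · intro ℓ hℓ
    rw [Finset.mem_Icc] at hℓ
    have hc : (((M - ℓ).toNat : ℝ)) = (M:ℝ) - ℓ := by
      have := Int.toNat_of_nonneg (sub_nonneg.2 hℓ.2)
      exact_mod_cast congrArg (fun z : ℤ => (z : ℝ)) this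
    rw [intervalIntegral.integral_comp_sub_right f (ℓ:ℝ)]
    rw [hψ]
    push_cast [hc]
    norm_num
    ring_nf

private lemma wj_moments (φ : ℝ → ℝ)
    (hφint : Integrable φ) (hφint' : Integrable (fun x => x * φ x))
    (a : ℝ) (ha : 1 / 2 ≤ a) (hφsupp : Function.support φ ⊆ Icc (-a) a)
    (hw1 : ∀ x : ℝ, ∑' ℓ : ℤ, φ (x - ℓ) = 1)
    (hw2 : ∀ x : ℝ, ∑' ℓ : ℤ, (ℓ : ℝ) * φ (x - ℓ) = x) :
    (∫ x, φ x) = 1 ∧ (∫ x, x * φ x) = 0 := by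
  have ha0 : (0:ℝ) < a := lt_of_lt_of_le (by norm_num) ha
  set m : ℤ := ⌈-a⌉ with hm
  set M : ℤ := ⌊1 + a⌋ with hM
  have hmM : m ≤ M := by
    have h1 : (m:ℝ) < -a + 1 := Int.ceil_lt_add_one _
    have h2 : (1:ℝ) + a - 1 < (M:ℝ) := Int.sub_one_lt_floor _
    have : (m:ℝ) < (M:ℝ) + 1 := by linarith
    exact_mod_cast Int.lt_add_one_iff.mp (by exact_mod_cast this)
  have haM : a < (M:ℝ) := by
    have := Int.sub_one_lt_floor (1 + a); rw [← hM] at this; linarith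
  have ham : a < 1 - (m:ℝ) := by
    have := Int.ceil_lt_add_one (-a); rw [← hm] at this; linarith
  have hmem : ∀ x : ℝ, x ∈ Icc (0:ℝ) 1 → ∀ ℓ : ℤ, ℓ ∉ Finset.Icc m M → φ (x - ℓ) = 0 := by
    intro x hx ℓ hℓ
    by_contra h0
    apply hℓ
    have hsup := hφsupp h0
    rw [Finset.mem_Icc]
    constructor
    · rw [hm]; apply Int.ceil_le.mpr; push_cast
      have := hsup.2; have := hx.1; linarith
    · rw [hM]; apply Int.le_floor.mpr; push_cast
      have := hsup.1; have := hx.2; linarith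
  have hsum1 : ∀ x : ℝ, x ∈ Icc (0:ℝ) 1 → ∑ ℓ ∈ Finset.Icc m M, φ (x - ℓ) = 1 := by
    intro x hx
    rw [← tsum_eq_sum (L := .unconditional ℤ) (fun ℓ hℓ => hmem x hx ℓ hℓ)]
    exact hw1 x
  have hsum2 : ∀ x : ℝ, x ∈ Icc (0:ℝ) 1 → ∑ ℓ ∈ Finset.Icc m M, (ℓ:ℝ) * φ (x - ℓ) = x := by
    intro x hx
    rw [← tsum_eq_sum (L := .unconditional ℤ) (fun ℓ hℓ => by rw [hmem x hx ℓ hℓ, mul_zero])]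
    exact hw2 x
  have hIoc : ∀ f : ℝ → ℝ, Function.support f ⊆ Icc (-a) a →
      ∫ x in (-(M:ℝ))..(1 - (m:ℝ)), f x = ∫ x, f x := by
    intro f hsupp
    have hab : -(M:ℝ) ≤ 1 - (m:ℝ) := by linarith
    rw [intervalIntegral.integral_of_le hab]
    apply setIntegral_eq_integral_of_forall_compl_eq_zero
    intro x hx
    by_contra h0
    apply hx
    have hs := hsupp h0
    exact ⟨by have := hs.1; linarith, by have := hs.2; linarith⟩
  have hshift : ∀ (f : ℝ → ℝ), Integrable f → ∀ ℓ : ℤ,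
      IntervalIntegrable (fun x => f (x - (ℓ:ℝ))) volume 0 1 :=
    fun f hf ℓ => (hf.comp_sub_right (ℓ:ℝ)).intervalIntegrable
  constructor
  · have e1 : ∫ x in (0:ℝ)..1, (∑ ℓ ∈ Finset.Icc m M, φ (x - ℓ)) = 1 := by
      rw [intervalIntegral.integral_congr (g := fun _ => (1:ℝ))
        (fun x hx => hsum1 x (by rwa [uIcc_of_le (by norm_num)] at hx))]
      simp
    rw [intervalIntegral.integral_finset_sum (fun ℓ _ => hshift φ hφint ℓ)] at e1
    rw [wj_tele φ hφint m M hmM] at e1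
    rw [hIoc φ hφsupp] at e1
    exact e1
  · have hsupp' : Function.support (fun x => x * φ x) ⊆ Icc (-a) a := by
      intro x hx
      apply hφsupp
      intro h0
      exact hx (by simp [Function.mem_support, h0])
    have e1 : ∫ x in (0:ℝ)..1,
        (∑ ℓ ∈ Finset.Icc m M, (fun t => t * φ t) (x - (ℓ:ℝ))) = 0 := by
      rw [intervalIntegral.integral_congr (g := fun _ => (0:ℝ))]
      · simp
      · intro x hx
        rw [uIcc_of_le (by norm_num : (0:ℝ) ≤ 1)] at hx
        dsimp only
        have : ∑ ℓ ∈ Finset.Icc m M, (x - (ℓ:ℝ)) * φ (x - ℓ) =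
            x * ∑ ℓ ∈ Finset.Icc m M, φ (x - ℓ) -
              ∑ ℓ ∈ Finset.Icc m M, (ℓ:ℝ) * φ (x - ℓ) := by
          rw [Finset.mul_sum, ← Finset.sum_sub_distrib]
          exact Finset.sum_congr rfl fun ℓ _ => by ring
        rw [this, hsum1 x hx, hsum2 x hx]
        ring
    rw [intervalIntegral.integral_finset_sum
      (fun ℓ _ => hshift (fun t => t * φ t) hφint' ℓ)] at e1
    rw [wj_tele (fun t => t * φ t) hφint' m M hmM] at e1
    rw [hIoc (fun t => t * φ t) hsupp'] at e1
    exact e1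

private lemma wj_core (φ : ℝ → ℝ) (hφnn : ∀ x, 0 ≤ φ x)
    (hφint : Integrable φ) (hφintid : Integrable (fun x => x * φ x))
    (hM0 : (∫ x, φ x) = 1) (hM1 : (∫ x, x * φ x) = 0)
    (a : ℝ) (ha0 : 0 < a) (hφsupp : Function.support φ ⊆ Icc (-a) a)
    (hw1 : ∀ x : ℝ, ∑' ℓ : ℤ, φ (x - ℓ) = 1)
    (hw2 : ∀ x : ℝ, ∑' ℓ : ℤ, (ℓ : ℝ) * φ (x - ℓ) = x)
    (g : ℝ → ℝ) (hgconv : ConvexOn ℝ univ g)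
    (j : ℤ) (y : ℝ)
    (hgint : Integrable fun x : ℝ =>
      g x * ((2 : ℝ) ^ j * ∑' ℓ : ℤ, φ ((2 : ℝ) ^ j * y - ℓ) * φ ((2 : ℝ) ^ j * x - ℓ))) :
    g y ≤ ∫ x : ℝ,
      g x * ((2 : ℝ) ^ j * ∑' ℓ : ℤ, φ ((2 : ℝ) ^ j * y - ℓ) * φ ((2 : ℝ) ^ j * x - ℓ)) := by
  set c : ℝ := (2 : ℝ) ^ j with hcdef
  have hc : 0 < c := zpow_pos (by norm_num) j
  set u : ℝ := c * y with hudef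
  set S : Finset ℤ := Finset.Icc ⌈u - a⌉ ⌊u + a⌋ with hSdef
  have hvan : ∀ ℓ : ℤ, ℓ ∉ S → φ (u - ℓ) = 0 := by
    intro ℓ hℓ
    by_contra h0
    apply hℓ
    have hs := hφsupp h0
    rw [hSdef, Finset.mem_Icc]
    constructor
    · exact Int.ceil_le.mpr (by have := hs.2; push_cast; linarith)
    · exact Int.le_floor.mpr (by have := hs.1; push_cast; linarith)
  have hK : ∀ x : ℝ, (∑' ℓ : ℤ, φ (u - ℓ) * φ (c * x - ℓ)) =
      ∑ ℓ ∈ S, φ (u - ℓ) * φ (c * x - ℓ) :=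
    fun x => tsum_eq_sum (fun ℓ hℓ => by rw [hvan ℓ hℓ, zero_mul])
  have hS1 : ∑ ℓ ∈ S, φ (u - ℓ) = 1 := by
    rw [← tsum_eq_sum (L := .unconditional ℤ) (fun ℓ hℓ => hvan ℓ hℓ)]; exact hw1 u
  have hS2 : ∑ ℓ ∈ S, (ℓ:ℝ) * φ (u - ℓ) = u := by
    rw [← tsum_eq_sum (L := .unconditional ℤ) (fun ℓ hℓ => by rw [hvan ℓ hℓ, mul_zero])]; exact hw2 u
  -- integrability and integrals of building blocks
  have Int0 : ∀ ℓ : ℤ, Integrable (fun x => φ (c * x - ℓ)) :=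
    fun ℓ => (integrable_comp_mul_left_iff
      (fun t => φ (t - (ℓ:ℝ))) hc.ne').mpr (hφint.comp_sub_right (ℓ:ℝ))
  have I0 : ∀ ℓ : ℤ, (∫ x, φ (c * x - ℓ)) = c⁻¹ := by
    intro ℓ
    have h1 := Measure.integral_comp_mul_left (fun t => φ (t - (ℓ:ℝ))) c
    rw [h1, integral_sub_right_eq_self φ (ℓ:ℝ), hM0, smul_eq_mul, mul_one,
      abs_of_pos (inv_pos.mpr hc)]
  have IntG : ∀ ℓ : ℤ, Integrable (fun t : ℝ => t * φ (t - (ℓ:ℝ))) := by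
    intro ℓ
    have h1 : Integrable (fun t : ℝ => (t - (ℓ:ℝ)) * φ (t - (ℓ:ℝ))) :=
      hφintid.comp_sub_right (ℓ:ℝ)
    have h2 : Integrable (fun t : ℝ => (ℓ:ℝ) * φ (t - (ℓ:ℝ))) :=
      (hφint.comp_sub_right (ℓ:ℝ)).const_mul _
    have := h1.add h2
    refine this.congr (ae_of_all _ fun t => ?_)
    dsimp only [Pi.add_apply]
    ring
  have IntId : ∀ ℓ : ℤ, Integrable (fun x => x * φ (c * x - ℓ)) := by
    intro ℓ
    have h1 : Integrable (fun x : ℝ => (c * x) * φ (c * x - (ℓ:ℝ))) :=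
      (integrable_comp_mul_left_iff (fun t => t * φ (t - (ℓ:ℝ))) hc.ne').mpr (IntG ℓ)
    refine (h1.const_mul c⁻¹).congr (ae_of_all _ fun x => ?_)
    dsimp only
    field_simp
  have I1 : ∀ ℓ : ℤ, (∫ x, x * φ (c * x - ℓ)) = (ℓ:ℝ) / c ^ 2 := by
    intro ℓ
    have e : (fun x : ℝ => x * φ (c * x - ℓ)) =
        fun x => (fun t : ℝ => (t / c) * φ (t - (ℓ:ℝ))) (c * x) := by
      funext x; dsimp only; rw [mul_comm c x, mul_div_assoc, div_self hc.ne', mul_one]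
    rw [e, Measure.integral_comp_mul_left (fun t : ℝ => (t / c) * φ (t - (ℓ:ℝ))) c]
    have e2 : (fun t : ℝ => (t / c) * φ (t - (ℓ:ℝ))) =
        fun t => (fun s : ℝ => ((s + (ℓ:ℝ)) / c) * φ s) (t - (ℓ:ℝ)) := by
      funext t; dsimp only; rw [sub_add_cancel]
    rw [e2, integral_sub_right_eq_self (fun s : ℝ => ((s + (ℓ:ℝ)) / c) * φ s) (ℓ:ℝ)]
    have e3 : (fun s : ℝ => ((s + (ℓ:ℝ)) / c) * φ s) =
        fun s => c⁻¹ * (s * φ s) + ((ℓ:ℝ) / c) * φ s := by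
      funext s; field_simp
    rw [e3, integral_add (hφintid.const_mul _) (hφint.const_mul _),
      integral_const_mul, integral_const_mul, hM0, hM1, smul_eq_mul,
      abs_of_pos (inv_pos.mpr hc)]
    ring
  -- kernel-level integrals
  set SK : ℝ → ℝ := fun x => ∑ ℓ ∈ S, φ (u - ℓ) * φ (c * x - ℓ) with hSK
  have IK : Integrable SK := integrable_finset_sum _ fun ℓ _ => (Int0 ℓ).const_mul _
  have IA : (∫ x, SK x) = c⁻¹ := by
    rw [hSK, integral_finset_sum _ fun ℓ _ => (Int0 ℓ).const_mul _]
    have : ∀ ℓ ∈ S, (∫ x, φ (u - ℓ) * φ (c * x - ℓ)) = φ (u - ℓ) * c⁻¹ := by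
      intro ℓ _
      rw [integral_const_mul, I0 ℓ]
    rw [Finset.sum_congr rfl this, ← Finset.sum_mul, hS1, one_mul]
  set F : ℝ → ℝ := fun x => ∑ ℓ ∈ S, φ (u - ℓ) * (x * φ (c * x - ℓ)) with hF
  have hFx : ∀ x, x * SK x = F x := by
    intro x
    rw [hSK, hF, Finset.mul_sum]
    exact Finset.sum_congr rfl fun ℓ _ => by ring
  have IntF : Integrable F := integrable_finset_sum _ fun ℓ _ => (IntId ℓ).const_mul _
  have IB : (∫ x, F x) = u / c ^ 2 := by
    rw [hF, integral_finset_sum _ fun ℓ _ => (IntId ℓ).const_mul _]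
    have : ∀ ℓ ∈ S, (∫ x, φ (u - ℓ) * (x * φ (c * x - ℓ))) =
        ((ℓ:ℝ) * φ (u - ℓ)) / c ^ 2 := by
      intro ℓ _
      rw [integral_const_mul, I1 ℓ]
      ring
    rw [Finset.sum_congr rfl this, ← Finset.sum_div, hS2]
  -- supporting line
  obtain ⟨sl, hsl⟩ := wj_support_line hgconv y
  have hSKnn : ∀ x, 0 ≤ SK x :=
    fun x => Finset.sum_nonneg fun ℓ _ => mul_nonneg (hφnn _) (hφnn _)
  -- rewrite the goal integrand with the finite sum
  have egoal : (fun x : ℝ => g x *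
      ((2 : ℝ) ^ j * ∑' ℓ : ℤ, φ ((2 : ℝ) ^ j * y - ℓ) * φ ((2 : ℝ) ^ j * x - ℓ))) =
      fun x => g x * (c * SK x) := by
    funext x
    rw [← hcdef, ← hudef, hK x, hSK]
  have hgint2 : Integrable (fun x => g x * (c * SK x)) := by rw [← egoal]; exact hgint
  have intL : Integrable (fun x => ((g y - sl * y) * c) * SK x + (sl * c) * F x) :=
    ((IK.const_mul _).add (IntF.const_mul _))
  have hLle : ∀ x, ((g y - sl * y) * c) * SK x + (sl * c) * F x ≤ g x * (c * SK x) := by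
    intro x
    have h1 := hsl x
    have h2 : ((g y - sl * y) * c) * SK x + (sl * c) * F x =
        (g y + sl * (x - y)) * (c * SK x) := by
      rw [← hFx x]; ring
    rw [h2]
    exact mul_le_mul_of_nonneg_right h1 (mul_nonneg hc.le (hSKnn x))
  have hLint : (∫ x, ((g y - sl * y) * c) * SK x + (sl * c) * F x) = g y := by
    rw [integral_add (IK.const_mul _) (IntF.const_mul _),
      integral_const_mul, integral_const_mul, IA, IB, hudef]
    field_simp
    ring
  calc g y = ∫ x, ((g y - sl * y) * c) * SK x + (sl * c) * F x := hLint.symm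
    _ ≤ ∫ x, g x * (c * SK x) := integral_mono intL hgint2 hLle
    _ = _ := by rw [egoal]


/-- **Wavelet Jensen inequality** (key step in the proof of Theorem 4.3): under
the partition-of-unity condition (w1) and the linear-reproduction condition
(w2), the wavelet kernel `2^j ∑_ℓ φ(2^j y - ℓ) φ(2^j x - ℓ)` averages any convex
integrable `g` to a value ≥ `g(y)`; consequently the wavelet density estimator
`d̃_{N,j}` satisfies `∫ g d̃_{N,j} ≥ (1/N) ∑ᵢ g(Xᵢ)`. -/
theorem wavelet_jensen
    (φ : ℝ → ℝ) (hφnn : ∀ x, 0 ≤ φ x)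
    (hφrc : ∀ x, ContinuousWithinAt φ (Ici x) x)
    (hφbv : BoundedVariationOn φ univ)
    (a : ℝ) (ha : 1 / 2 ≤ a) (hφsupp : Function.support φ ⊆ Icc (-a) a)
    (hw1 : ∀ x : ℝ, ∑' ℓ : ℤ, φ (x - ℓ) = 1)
    (hw2 : ∀ x : ℝ, ∑' ℓ : ℤ, (ℓ : ℝ) * φ (x - ℓ) = x)
    (g : ℝ → ℝ) (hgconv : ConvexOn ℝ univ g)
    (hgint : ∀ (j : ℤ) (y : ℝ), Integrable fun x : ℝ =>
      g x * ((2 : ℝ) ^ j * ∑' ℓ : ℤ, φ ((2 : ℝ) ^ j * y - ℓ) * φ ((2 : ℝ) ^ j * x - ℓ))) :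
    (∀ (j : ℤ) (y : ℝ),
      g y ≤ (2 : ℝ) ^ j *
        ∫ x : ℝ, g x * ∑' ℓ : ℤ, φ ((2 : ℝ) ^ j * y - ℓ) * φ ((2 : ℝ) ^ j * x - ℓ)) ∧
    (∀ (N : ℕ), 0 < N → ∀ (X : Fin N → ℝ) (j : ℤ),
      (N : ℝ)⁻¹ * ∑ i, g (X i) ≤
        ∫ x : ℝ, g x * (((2 : ℝ) ^ j / N) *
          ∑ i, ∑' ℓ : ℤ, φ ((2 : ℝ) ^ j * X i - ℓ) * φ ((2 : ℝ) ^ j * x - ℓ))) := by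
  have hmeas := wj_measurable φ hφbv
  obtain ⟨M, hM0', hMb⟩ := wj_bound φ hφbv
  have ha0 : (0:ℝ) < a := lt_of_lt_of_le (by norm_num) ha
  have hφint := wj_integrable φ hmeas hMb hφsupp
  have hφintid := wj_integrable_id φ hmeas hMb ha0.le hφsupp
  obtain ⟨hI0, hI1⟩ := wj_moments φ hφint hφintid a ha hφsupp hw1 hw2
  have core : ∀ (j : ℤ) (y : ℝ), g y ≤ ∫ x : ℝ,
      g x * ((2 : ℝ) ^ j * ∑' ℓ : ℤ, φ ((2 : ℝ) ^ j * y - ℓ) * φ ((2 : ℝ) ^ j * x - ℓ)) :=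
    fun j y => wj_core φ hφnn hφint hφintid hI0 hI1 a ha0 hφsupp hw1 hw2 g hgconv j y
      (hgint j y)
  constructor
  · intro j y
    have h := core j y
    have e : (fun x : ℝ => g x *
        ((2 : ℝ) ^ j * ∑' ℓ : ℤ, φ ((2 : ℝ) ^ j * y - ℓ) * φ ((2 : ℝ) ^ j * x - ℓ))) =
        fun x => (2 : ℝ) ^ j *
          (g x * ∑' ℓ : ℤ, φ ((2 : ℝ) ^ j * y - ℓ) * φ ((2 : ℝ) ^ j * x - ℓ)) :=
      funext fun x => by ring
    rwa [e, integral_const_mul] at h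
  · intro N hN X j
    have key : (fun x : ℝ => g x * (((2 : ℝ) ^ j / N) *
        ∑ i, ∑' ℓ : ℤ, φ ((2 : ℝ) ^ j * X i - ℓ) * φ ((2 : ℝ) ^ j * x - ℓ))) =
        fun x => (N : ℝ)⁻¹ * ∑ i, g x *
          ((2 : ℝ) ^ j * ∑' ℓ : ℤ, φ ((2 : ℝ) ^ j * X i - ℓ) * φ ((2 : ℝ) ^ j * x - ℓ)) := by
      funext x
      have e1 : ∑ i, g x * ((2 : ℝ) ^ j *
          ∑' ℓ : ℤ, φ ((2 : ℝ) ^ j * X i - ℓ) * φ ((2 : ℝ) ^ j * x - ℓ)) =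
          (g x * (2 : ℝ) ^ j) *
            ∑ i, ∑' ℓ : ℤ, φ ((2 : ℝ) ^ j * X i - ℓ) * φ ((2 : ℝ) ^ j * x - ℓ) := by
        rw [Finset.mul_sum]
        exact Finset.sum_congr rfl fun i _ => by ring
      rw [e1]
      ring
    rw [key, integral_const_mul, integral_finset_sum _ (fun i _ => hgint j (X i))]
    exact mul_le_mul_of_nonneg_left (Finset.sum_le_sum fun i _ => core j (X i))
      (by positivity)
end
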